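/- Let f : ℝⁿ → ℝ be twice continuously differentiable with L-Lipschitz Hessian, let m > 0, and let x_c be a critical point of f (∇f(x_c) = 0) such that every eigenvalue of ∇²f(x_c) satisfies |λ_i(∇²f(x_c))| ≥ 2m. Then for every x ∈ ℝⁿ with ‖x − x_c‖ ≤ m/L, it holds that m‖x − x_c‖ ≤ ‖∇f(x)‖. -/

import Mathlib

open scoped InnerProductSpace
open InnerProductSpace

lemma lower_bound_eig {n : ℕ} (A : Matrix (Fin n) (Fin n) ℝ) (hA : A.IsHermitian)
    (c : ℝ) (hc : 0 ≤ c) (h : ∀ i, c ≤ |hA.eigenvalues i|) (v : EuclideanSpace ℝ (Fin n)) :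
    c * ‖v‖ ≤ ‖Matrix.toEuclideanLin A v‖ := by
  set b := hA.eigenvectorBasis
  have hAb : ∀ j, Matrix.toEuclideanLin A (b j) = hA.eigenvalues j • b j := by
    intro j
    have := hA.mulVec_eigenvectorBasis j
    apply PiLp.ext
    intro i
    simp only [Matrix.toEuclideanLin_apply]
    have := congrFun this i
    simpa using this
  have hsym : LinearMap.IsSymmetric (Matrix.toEuclideanLin A) :=
    Matrix.isHermitian_iff_isSymmetric.mp hA
  have hrepr : ∀ i, b.repr (Matrix.toEuclideanLin A v) i = hA.eigenvalues i * b.repr v i := by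
    intro i
    rw [b.repr_apply_apply, b.repr_apply_apply, ← hsym (b i) v, hAb i]
    simp [real_inner_smul_left, Finset.mul_sum, mul_assoc]
  have hnorm : ∀ w : EuclideanSpace ℝ (Fin n), ‖w‖ ^ 2 = ∑ i, (b.repr w i) ^ 2 := by
    intro w
    rw [← b.repr.norm_map w, EuclideanSpace.norm_eq, Real.sq_sqrt (by positivity)]
    simp [sq_abs]
  have hsq : (c * ‖v‖) ^ 2 ≤ ‖Matrix.toEuclideanLin A v‖ ^ 2 := by
    rw [mul_pow, hnorm, hnorm, Finset.mul_sum]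
    apply Finset.sum_le_sum
    intro i _
    rw [hrepr i, mul_pow]
    have : c ^ 2 ≤ hA.eigenvalues i ^ 2 := by
      rw [← sq_abs (hA.eigenvalues i)]
      exact pow_le_pow_left₀ hc (h i) 2
    nlinarith [sq_nonneg (b.repr v i)]
  have h1 : 0 ≤ c * ‖v‖ := by positivity
  nlinarith [norm_nonneg (Matrix.toEuclideanLin A v)]

lemma grad_deriv {n : ℕ} (f : EuclideanSpace ℝ (Fin n) → ℝ)
    (Hess : EuclideanSpace ℝ (Fin n) → Matrix (Fin n) (Fin n) ℝ)
    (hf : ContDiff ℝ 2 f)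
    (hHessf : ∀ x u v, iteratedFDeriv ℝ 2 f x ![u, v] = ⟪u, Matrix.toEuclideanLin (Hess x) v⟫_ℝ)
    (hsymm : ∀ x, (Hess x).IsHermitian) (y : EuclideanSpace ℝ (Fin n)) :
    HasFDerivAt (gradient f) (Matrix.toEuclideanCLM (𝕜 := ℝ) (Hess y)) y := by
  have hfd : ContDiff ℝ 1 (fderiv ℝ f) := hf.fderiv_right (by norm_num)
  have h1 : HasFDerivAt (fderiv ℝ f) (fderiv ℝ (fderiv ℝ f) y) y :=
    (hfd.differentiable one_ne_zero y).hasFDerivAt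
  set ι : (EuclideanSpace ℝ (Fin n) →L[ℝ] ℝ) ≃L[ℝ] EuclideanSpace ℝ (Fin n) :=
    (toDual ℝ (EuclideanSpace ℝ (Fin n))).symm.toContinuousLinearEquiv with hι
  have h2 : HasFDerivAt (gradient f)
      ((ι : _ →L[ℝ] _).comp (fderiv ℝ (fderiv ℝ f) y)) y := by
    have := (ι.toContinuousLinearMap.hasFDerivAt.comp y h1)
    exact this
  convert h2 using 1
  ext v : 1
  apply ext_inner_right ℝ
  intro w
  have hD : fderiv ℝ (fderiv ℝ f) y v w = ⟪v, Matrix.toEuclideanLin (Hess y) w⟫_ℝ := by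
    rw [← hHessf y v w, iteratedFDeriv_two_apply]
    simp
  have hsym : LinearMap.IsSymmetric (Matrix.toEuclideanLin (Hess y)) :=
    Matrix.isHermitian_iff_isSymmetric.mp (hsymm y)
  have hCLM : ∀ u, Matrix.toEuclideanCLM (𝕜 := ℝ) (Hess y) u = Matrix.toEuclideanLin (Hess y) u := by
    intro u
    rw [← Matrix.coe_toEuclideanCLM_eq_toEuclideanLin]
    rfl
  rw [hCLM]
  have hterm : (ι : _ →L[ℝ] _).comp (fderiv ℝ (fderiv ℝ f) y) v
      = (toDual ℝ (EuclideanSpace ℝ (Fin n))).symm (fderiv ℝ (fderiv ℝ f) y v) := rfl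
  rw [hterm, hsym v w]
  have : ⟪(toDual ℝ (EuclideanSpace ℝ (Fin n))).symm (fderiv ℝ (fderiv ℝ f) y v), w⟫_ℝ
      = (toDual ℝ (EuclideanSpace ℝ (Fin n)))
        ((toDual ℝ (EuclideanSpace ℝ (Fin n))).symm (fderiv ℝ (fderiv ℝ f) y v)) w := by
    simp [toDual_apply_apply]
  rw [this, LinearIsometryEquiv.apply_symm_apply, hD]

/-- If `f : ℝⁿ → ℝ` is twice continuously differentiable with `L`-Lipschitz Hessian,
`x_c` is a critical point of `f` at which every eigenvalue of the Hessian has absolute value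
at least `2m` (with `m > 0`), then every point `x` with `‖x - x_c‖ ≤ m/L` satisfies
`m‖x - x_c‖ ≤ ‖∇f(x)‖`. Here `Hess x` is the Hessian matrix of `f` at `x`, characterized by
`⟪u, Hess x v⟫ = D²f(x)[u, v]`. -/
theorem gradient_lower_bound_near_nondegenerate_critical_point {n : ℕ}
    (f : EuclideanSpace ℝ (Fin n) → ℝ) (L m : ℝ)
    (Hess : EuclideanSpace ℝ (Fin n) → Matrix (Fin n) (Fin n) ℝ)
    (hf : ContDiff ℝ 2 f)
    (hHessf : ∀ x u v, iteratedFDeriv ℝ 2 f x ![u, v] = ⟪u, Matrix.toEuclideanLin (Hess x) v⟫_ℝ)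
    (hsymm : ∀ x, (Hess x).IsHermitian)
    (hLip : ∀ x y, ‖Matrix.toEuclideanCLM (𝕜 := ℝ) (Hess x - Hess y)‖ ≤ L * ‖x - y‖)
    (hm : 0 < m)
    (xc : EuclideanSpace ℝ (Fin n)) (hcrit : gradient f xc = 0)
    (heig : ∀ i, 2 * m ≤ |(hsymm xc).eigenvalues i|)
    (x : EuclideanSpace ℝ (Fin n)) (hx : ‖x - xc‖ ≤ m / L) :
    m * ‖x - xc‖ ≤ ‖gradient f x‖ := by
  rcases eq_or_ne x xc with rfl | hne
  · simp [hcrit]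
  set r := ‖x - xc‖ with hr
  have hrpos : 0 < r := by
    rw [hr, norm_pos_iff]
    exact sub_ne_zero_of_ne hne
  have hL0 : 0 ≤ L := by
    have := hLip x xc
    nlinarith [norm_nonneg (Matrix.toEuclideanCLM (𝕜 := ℝ) (Hess x - Hess xc))]
  have hLpos : 0 < L := by
    rcases hL0.lt_or_eq with h | h
    · exact h
    · exfalso; rw [← h] at hx; simp at hx; linarith
  have hLr : L * r ≤ m := by
    rw [le_div_iff₀ hLpos] at hx
    linarith [hx]
  -- mean value estimate
  set A := Matrix.toEuclideanCLM (𝕜 := ℝ) (Hess xc) with hA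
  set g : EuclideanSpace ℝ (Fin n) → EuclideanSpace ℝ (Fin n) := fun y => gradient f y - A y with hg
  have hmv : ‖g x - g xc‖ ≤ (L * r) * ‖x - xc‖ := by
    apply Convex.norm_image_sub_le_of_norm_hasFDerivWithin_le
      (f' := fun y => Matrix.toEuclideanCLM (𝕜 := ℝ) (Hess y - Hess xc))
      (s := Metric.closedBall xc r)
    · intro y hy
      have h1 : HasFDerivAt g (Matrix.toEuclideanCLM (𝕜 := ℝ) (Hess y) - A) y :=
        (grad_deriv f Hess hf hHessf hsymm y).sub (ContinuousLinearMap.hasFDerivAt A)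
      have h2 : Matrix.toEuclideanCLM (𝕜 := ℝ) (Hess y - Hess xc)
          = Matrix.toEuclideanCLM (𝕜 := ℝ) (Hess y) - A := by
        rw [hA, map_sub]
      rw [h2]
      exact h1.hasFDerivWithinAt
    · intro y hy
      calc ‖Matrix.toEuclideanCLM (𝕜 := ℝ) (Hess y - Hess xc)‖ ≤ L * ‖y - xc‖ := hLip y xc
        _ ≤ L * r := by
            apply mul_le_mul_of_nonneg_left _ hL0
            simpa [dist_eq_norm] using hy
    · exact convex_closedBall xc r
    · exact Metric.mem_closedBall_self (le_of_lt hrpos)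
    · simp [Metric.mem_closedBall, dist_eq_norm, hr]
  have hgx : g x - g xc = gradient f x - A (x - xc) := by
    rw [hg]
    simp only [hcrit, map_sub]
    abel
  have hAlb : 2 * m * r ≤ ‖A (x - xc)‖ := by
    have := lower_bound_eig (Hess xc) (hsymm xc) (2 * m) (by linarith) heig (x - xc)
    have hCLM : A (x - xc) = Matrix.toEuclideanLin (Hess xc) (x - xc) := by
      rw [hA, ← Matrix.coe_toEuclideanCLM_eq_toEuclideanLin]; rfl
    rw [hCLM]
    exact this
  have htri : ‖A (x - xc)‖ ≤ ‖gradient f x‖ + ‖gradient f x - A (x - xc)‖ := by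
    calc ‖A (x - xc)‖ = ‖gradient f x - (gradient f x - A (x - xc))‖ := by rw [sub_sub_cancel]
      _ ≤ _ := norm_sub_le _ _
  rw [hgx] at hmv
  have : (L * r) * ‖x - xc‖ = L * r * r := by rw [← hr]
  nlinarith [norm_nonneg (gradient f x)]
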